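/- Let d ≥ 3 and g₀(x) = (1+|x|²)^{-(d-1)/2} on ℝ^d. Then equality holds in the p = (d+1)/(d−1) Gagliardo-Nirenberg-Sobolev inequality at g₀: C_S·(d(d-2)/(d-1)²)·‖∇g₀‖₂²·‖g₀‖_{2d/(d-1)}^{4/(d-1)} = ‖g₀‖_{2(d+1)/(d-1)}^{2(d+1)/(d-1)}, where C_S = (4/(d(d-2)))|S^d|^{-2/d} and |S^d| is the surface measure of the unit sphere in ℝ^{d+1}. -/

import Mathlib

open MeasureTheory Real
open scoped ENNReal

noncomputable section

/-- Euclidean space `ℝ^d`. -/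
abbrev E (d : ℕ) := EuclideanSpace ℝ (Fin d)

/-- The sharp constant `C_S = (4/(d(d-2))) |S^d|^{-2/d}`, where
`|S^d| = 2 π^{(d+1)/2} / Γ((d+1)/2)` is the surface measure of the unit sphere
in `ℝ^{d+1}`. -/
def CS (d : ℕ) : ℝ :=
  (4 / ((d : ℝ) * ((d : ℝ) - 2))) *
    (2 * Real.pi ^ (((d : ℝ) + 1) / 2) / Real.Gamma (((d : ℝ) + 1) / 2)) ^
      (-(2 : ℝ) / (d : ℝ))

open Set

lemma aux_integrable_gauss (d : ℕ) {t : ℝ} (ht : 0 < t) :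
    Integrable (fun x : E d => rexp (-(t * ‖x‖ ^ 2))) := by
  have h := (GaussianFourier.integrable_cexp_neg_mul_sq_norm_add (V := E d)
    (b := (t : ℂ)) (by simpa using ht) 0 0).norm
  refine h.congr (Filter.Eventually.of_forall fun x => ?_)
  simp only [Complex.norm_exp]
  congr 1
  simp [neg_mul, ← Complex.ofReal_pow]

lemma aux_gauss_lintegral (d : ℕ) {t : ℝ} (ht : 0 < t) :
    ∫⁻ x : E d, ENNReal.ofReal (rexp (-(t * ‖x‖ ^ 2)))
      = ENNReal.ofReal ((Real.pi / t) ^ ((d : ℝ) / 2)) := by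
  rw [← ofReal_integral_eq_lintegral_ofReal (aux_integrable_gauss d ht)
      (Filter.Eventually.of_forall fun x => (Real.exp_pos _).le)]
  congr 1
  have h := GaussianFourier.integral_rexp_neg_mul_sq_norm (V := E d) ht
  simp only [neg_mul] at h ⊢
  rw [h, finrank_euclideanSpace_fin]

lemma aux_intOn (s r : ℝ) (hs : 0 < s) (hr : 0 < r) :
    IntegrableOn (fun t : ℝ => t ^ (s - 1) * rexp (-(r * t))) (Ioi 0) := by
  have h := integrableOn_rpow_mul_exp_neg_mul_rpow (p := 1) (s := s - 1) (b := r)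
    (by linarith) one_pos hr
  refine h.congr_fun (fun t ht => ?_) measurableSet_Ioi
  dsimp only
  rw [Real.rpow_one, neg_mul]

/-- The key integral: `∫⁻ (1+‖x‖²)^{-s} = π^{d/2} Γ(s-d/2)/Γ(s)` for `s > d/2`. -/
lemma aux_lintegral_J (d : ℕ) (hd : 0 < d) {s : ℝ} (hs : (d : ℝ) / 2 < s) :
    ∫⁻ x : E d, ENNReal.ofReal ((1 + ‖x‖ ^ 2) ^ (-s))
      = ENNReal.ofReal
          (Real.pi ^ ((d : ℝ) / 2) * Real.Gamma (s - (d : ℝ) / 2) / Real.Gamma s) := by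
  have hd2 : (0 : ℝ) < (d : ℝ) / 2 := by positivity
  have hs0 : 0 < s := hd2.trans hs
  have hΓ : 0 < Real.Gamma s := Real.Gamma_pos_of_pos hs0
  -- pointwise representation
  have step1 : ∀ x : E d,
      ENNReal.ofReal ((1 + ‖x‖ ^ 2) ^ (-s)) * ENNReal.ofReal (Real.Gamma s)
        = ∫⁻ t in Ioi (0 : ℝ),
            ENNReal.ofReal (t ^ (s - 1) * rexp (-((1 + ‖x‖ ^ 2) * t))) := by
    intro x
    have hr : (0 : ℝ) < 1 + ‖x‖ ^ 2 := by positivity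
    have key := Real.integral_rpow_mul_exp_neg_mul_Ioi hs0 hr
    rw [← ofReal_integral_eq_lintegral_ofReal (aux_intOn s _ hs0 hr) ?_]
    · rw [key, one_div, Real.inv_rpow hr.le, ← Real.rpow_neg hr.le,
        ENNReal.ofReal_mul (by positivity)]
    · filter_upwards [ae_restrict_mem measurableSet_Ioi] with t ht
      have : (0 : ℝ) < t := ht
      positivity
  have main : (∫⁻ x : E d, ENNReal.ofReal ((1 + ‖x‖ ^ 2) ^ (-s))) * ENNReal.ofReal (Real.Gamma s)
      = ENNReal.ofReal (Real.pi ^ ((d : ℝ) / 2) * Real.Gamma (s - (d : ℝ) / 2)) := by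
    rw [← lintegral_mul_const' _ _ ENNReal.ofReal_ne_top]
    calc
      ∫⁻ x : E d, ENNReal.ofReal ((1 + ‖x‖ ^ 2) ^ (-s)) * ENNReal.ofReal (Real.Gamma s)
          = ∫⁻ t in Ioi (0 : ℝ), ∫⁻ x : E d,
              ENNReal.ofReal (t ^ (s - 1) * rexp (-((1 + ‖x‖ ^ 2) * t))) := by
            rw [← lintegral_lintegral_swap]
            · exact lintegral_congr step1
            · fun_prop
      _ = ∫⁻ t in Ioi (0 : ℝ),
              ENNReal.ofReal (Real.pi ^ ((d : ℝ) / 2) * (t ^ (s - (d : ℝ) / 2 - 1) * rexp (-t))) := by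
            refine setLIntegral_congr_fun measurableSet_Ioi
              (fun t ht => ?_)
            have ht : (0 : ℝ) < t := ht
            have e1 : ∀ x : E d, t ^ (s - 1) * rexp (-((1 + ‖x‖ ^ 2) * t))
                = (t ^ (s - 1) * rexp (-t)) * rexp (-(t * ‖x‖ ^ 2)) := by
              intro x
              rw [mul_assoc, ← Real.exp_add]
              ring_nf
            simp_rw [e1]
            simp_rw [ENNReal.ofReal_mul (by positivity : (0:ℝ) ≤ t ^ (s - 1) * rexp (-t))]
            rw [lintegral_const_mul' _ _ ENNReal.ofReal_ne_top, aux_gauss_lintegral d ht,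
              ← ENNReal.ofReal_mul (by positivity)]
            congr 1
            have htd : (0:ℝ) < t ^ ((d:ℝ)/2) := Real.rpow_pos_of_pos ht _
            rw [Real.div_rpow pi_pos.le ht.le,
              show s - (d : ℝ) / 2 - 1 = (s - 1) + (-((d : ℝ) / 2)) by ring,
              Real.rpow_add ht, Real.rpow_neg ht.le]
            field_simp
      _ = ENNReal.ofReal (Real.pi ^ ((d : ℝ) / 2) * Real.Gamma (s - (d : ℝ) / 2)) := by
            simp_rw [ENNReal.ofReal_mul (by positivity : (0:ℝ) ≤ Real.pi ^ ((d : ℝ) / 2))]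
            rw [lintegral_const_mul' _ _ ENNReal.ofReal_ne_top]
            congr 1
            have hsd : 0 < s - (d : ℝ) / 2 := by linarith
            have hint := aux_intOn (s - (d : ℝ) / 2) 1 hsd one_pos
            rw [← ofReal_integral_eq_lintegral_ofReal ?_ ?_]
            · congr 1
              have key := Real.integral_rpow_mul_exp_neg_mul_Ioi hsd one_pos
              simp only [one_mul, one_div, inv_one, Real.one_rpow] at key ⊢
              rw [← key]
            · exact hint.congr_fun (fun t ht => by dsimp only; rw [one_mul]) measurableSet_Ioi
            · filter_upwards [ae_restrict_mem measurableSet_Ioi] with t ht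
              have : (0 : ℝ) < t := ht
              positivity
  have hne : ENNReal.ofReal (Real.Gamma s) ≠ 0 := by simpa using hΓ
  rw [ENNReal.ofReal_div_of_pos hΓ]
  rw [ENNReal.eq_div_iff hne ENNReal.ofReal_ne_top, mul_comm]
  exact main

lemma aux_cont (d : ℕ) (s : ℝ) : Continuous (fun x : E d => (1 + ‖x‖ ^ 2) ^ (-s)) := by
  apply Continuous.rpow_const
  · exact continuous_const.add ((continuous_norm).pow 2)
  · intro x
    left
    positivity

lemma aux_integrable_J (d : ℕ) (hd : 0 < d) {s : ℝ} (hs : (d : ℝ) / 2 < s) :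
    Integrable (fun x : E d => (1 + ‖x‖ ^ 2) ^ (-s)) := by
  refine ⟨(aux_cont d s).aestronglyMeasurable, ?_⟩
  rw [hasFiniteIntegral_iff_ofReal
    (Filter.Eventually.of_forall fun x => by positivity)]
  rw [aux_lintegral_J d hd hs]
  exact ENNReal.ofReal_lt_top

lemma aux_integral_J (d : ℕ) (hd : 0 < d) {s : ℝ} (hs : (d : ℝ) / 2 < s) :
    ∫ x : E d, (1 + ‖x‖ ^ 2) ^ (-s)
      = Real.pi ^ ((d : ℝ) / 2) * Real.Gamma (s - (d : ℝ) / 2) / Real.Gamma s := by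
  rw [integral_eq_lintegral_of_nonneg_ae
      (Filter.Eventually.of_forall fun x => by positivity)
      (aux_cont d s).aestronglyMeasurable,
    aux_lintegral_J d hd hs, ENNReal.toReal_ofReal]
  have h1 : 0 < Real.Gamma (s - (d : ℝ) / 2) :=
    Real.Gamma_pos_of_pos (by linarith [(by positivity : (0:ℝ) < (d:ℝ)/2)])
  have h2 : 0 < Real.Gamma s :=
    Real.Gamma_pos_of_pos (lt_trans (by positivity) hs)
  positivity

/-- Converting eLpNorm to an integral for nonnegative functions. -/
lemma aux_toReal_eLpNorm (d : ℕ) (f : E d → ℝ) (hf : ∀ x, 0 ≤ f x) {q : ℝ} (hq : 0 < q)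
    (hmeas : AEStronglyMeasurable f volume)
    (hint : Integrable (fun x : E d => f x ^ q)) :
    (eLpNorm f (ENNReal.ofReal q) volume).toReal = (∫ x : E d, f x ^ q) ^ (1 / q) := by
  rw [eLpNorm_eq_lintegral_rpow_enorm_toReal (by simp [ENNReal.ofReal_eq_zero]; linarith) ENNReal.ofReal_ne_top]
  rw [ENNReal.toReal_ofReal hq.le]
  have h1 : ∀ x : E d, ((‖f x‖ₑ : ℝ≥0∞)) ^ q = ENNReal.ofReal (f x ^ q) := by
    intro x
    rw [Real.enorm_eq_ofReal (hf x), ← ENNReal.ofReal_rpow_of_nonneg (hf x) hq.le]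
  simp_rw [h1]
  rw [← ofReal_integral_eq_lintegral_ofReal hint
    (Filter.Eventually.of_forall fun x => Real.rpow_nonneg (hf x) q)]
  rw [← ENNReal.toReal_rpow, ENNReal.toReal_ofReal (integral_nonneg fun x => Real.rpow_nonneg (hf x) q)]

/-- **Equality in the `p = (d+1)/(d-1)` GNS inequality at `g₀(x) = (1+|x|²)^{-(d-1)/2}`**:
`C_S (d(d-2)/(d-1)²) ‖∇g₀‖₂² ‖g₀‖_{2d/(d-1)}^{4/(d-1)} = ‖g₀‖_{2(d+1)/(d-1)}^{2(d+1)/(d-1)}`. -/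
theorem stmt11 (d : ℕ) (hd : 3 ≤ d)
    (g₀ : E d → ℝ) (hg₀ : ∀ x : E d, g₀ x = (1 + ‖x‖ ^ 2) ^ (-((d : ℝ) - 1) / 2)) :
    CS d * ((d : ℝ) * ((d : ℝ) - 2) / ((d : ℝ) - 1) ^ 2) *
        ((eLpNorm (fun x => ‖fderiv ℝ g₀ x‖) 2 volume).toReal) ^ 2 *
        ((eLpNorm g₀ (ENNReal.ofReal (2 * (d : ℝ) / ((d : ℝ) - 1))) volume).toReal) ^
          (4 / ((d : ℝ) - 1)) =
      ((eLpNorm g₀ (ENNReal.ofReal (2 * ((d : ℝ) + 1) / ((d : ℝ) - 1))) volume).toReal) ^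
        (2 * ((d : ℝ) + 1) / ((d : ℝ) - 1)) := by
  have hg : g₀ = fun x : E d => (1 + ‖x‖ ^ 2) ^ (-((d : ℝ) - 1) / 2) := funext hg₀
  subst hg
  have hd3 : (3 : ℝ) ≤ (d : ℝ) := by exact_mod_cast hd
  have hd0 : (0 : ℝ) < (d : ℝ) := by linarith
  have hd1 : (0 : ℝ) < (d : ℝ) - 1 := by linarith
  have hd2 : (0 : ℝ) < (d : ℝ) - 2 := by linarith
  have hdn : 0 < d := by omega
  have hcΓ : 0 < Real.Gamma (((d : ℝ) + 1) / 2) := Real.Gamma_pos_of_pos (by linarith)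
  have hΓd : 0 < Real.Gamma (d : ℝ) := Real.Gamma_pos_of_pos hd0
  simp only [CS]
  set Sd : ℝ := 2 * Real.pi ^ (((d : ℝ) + 1) / 2) / Real.Gamma (((d : ℝ) + 1) / 2) with hSddef
  have hSd : 0 < Sd := by positivity
  set K : ℝ := Sd * 2 ^ (-(d : ℝ)) with hKdef
  have hK : 0 < K := by positivity
  set p : ℝ := -((d : ℝ) - 1) / 2 with hp
  -- values of the two basic integrals
  have hbase : ∫ x : E d, (1 + ‖x‖ ^ 2) ^ (-(d : ℝ)) = K := by
    rw [aux_integral_J d hdn (by linarith : (d : ℝ) / 2 < (d : ℝ)),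
      show (d : ℝ) - (d : ℝ) / 2 = (d : ℝ) / 2 by ring]
    have hdup := Real.Gamma_mul_Gamma_add_half ((d : ℝ) / 2)
    rw [show (2 : ℝ) * ((d : ℝ) / 2) = (d : ℝ) by ring,
      show (d : ℝ) / 2 + 1 / 2 = ((d : ℝ) + 1) / 2 by ring] at hdup
    have hΓhalf : Real.Gamma ((d : ℝ) / 2)
        = Real.Gamma (d : ℝ) * 2 ^ (1 - (d : ℝ)) * Real.sqrt Real.pi
          / Real.Gamma (((d : ℝ) + 1) / 2) := by
      rw [eq_div_iff hcΓ.ne']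
      exact hdup
    rw [hΓhalf, hKdef, hSddef]
    have e1 : Real.sqrt Real.pi = Real.pi ^ ((1 : ℝ) / 2) := Real.sqrt_eq_rpow _
    have e2 : Real.pi ^ ((d : ℝ) / 2) * Real.pi ^ ((1 : ℝ) / 2) = Real.pi ^ (((d : ℝ) + 1) / 2) := by
      rw [← Real.rpow_add pi_pos]
      ring_nf
    have e3 : (2 : ℝ) ^ (1 - (d : ℝ)) = 2 * 2 ^ (-(d : ℝ)) := by
      rw [show (1 : ℝ) - (d : ℝ) = 1 + -(d : ℝ) by ring, Real.rpow_add two_pos, Real.rpow_one]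
    rw [e1, e3]
    field_simp
    rw [← e2]
  have hbase1 : ∫ x : E d, (1 + ‖x‖ ^ 2) ^ (-((d : ℝ) + 1)) = K / 2 := by
    rw [aux_integral_J d hdn (by linarith : (d : ℝ) / 2 < (d : ℝ) + 1),
      show (d : ℝ) + 1 - (d : ℝ) / 2 = (d : ℝ) / 2 + 1 by ring,
      Real.Gamma_add_one (by positivity : ((d : ℝ) / 2) ≠ 0),
      show ((d : ℝ) + 1) = (d : ℝ) + 1 by ring, Real.Gamma_add_one hd0.ne']
    have h0 : ∫ x : E d, (1 + ‖x‖ ^ 2) ^ (-(d : ℝ))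
        = Real.pi ^ ((d : ℝ) / 2) * Real.Gamma ((d : ℝ) / 2) / Real.Gamma (d : ℝ) := by
      rw [aux_integral_J d hdn (by linarith : (d : ℝ) / 2 < (d : ℝ)),
        show (d : ℝ) - (d : ℝ) / 2 = (d : ℝ) / 2 by ring]
    rw [hbase] at h0
    rw [show Real.pi ^ ((d : ℝ) / 2) * ((d : ℝ) / 2 * Real.Gamma ((d : ℝ) / 2))
          / ((d : ℝ) * Real.Gamma (d : ℝ))
        = (Real.pi ^ ((d : ℝ) / 2) * Real.Gamma ((d : ℝ) / 2) / Real.Gamma (d : ℝ)) / 2 by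
      field_simp]
    rw [← h0]
  -- the three eLpNorm computations
  have hr : ∀ x : E d, (0 : ℝ) < 1 + ‖x‖ ^ 2 := fun x => by positivity
  have hcont : Continuous (fun x : E d => (1 + ‖x‖ ^ 2) ^ p) := by
    have h := aux_cont d (((d : ℝ) - 1) / 2)
    simp only [hp, neg_div]
    exact h
  -- norm of the gradient
  have hnorm : ∀ x : E d, ‖fderiv ℝ (fun x : E d => (1 + ‖x‖ ^ 2) ^ p) x‖
      = ((d : ℝ) - 1) * (‖x‖ * (1 + ‖x‖ ^ 2) ^ (p - 1)) := by
    intro x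
    have h1 : HasFDerivAt (fun x : E d => 1 + ‖x‖ ^ 2) (2 • (innerSL ℝ x)) x := by
      have := (hasStrictFDerivAt_norm_sq x).hasFDerivAt
      simpa using this.const_add 1
    have h2 : HasFDerivAt (fun x : E d => (1 + ‖x‖ ^ 2) ^ p)
        ((p * (1 + ‖x‖ ^ 2) ^ (p - 1)) • (2 • (innerSL ℝ x))) x :=
      h1.rpow_const (Or.inl (hr x).ne')
    rw [h2.fderiv]
    have e0 : (p * (1 + ‖x‖ ^ 2) ^ (p - 1)) • ((2 : ℕ) • (innerSL ℝ x))
        = (p * (1 + ‖x‖ ^ 2) ^ (p - 1) * 2) • (innerSL ℝ x) := by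
      ext y
      simp [two_smul]
      ring
    rw [e0, norm_smul, innerSL_apply_norm, Real.norm_eq_abs, abs_mul, abs_mul]
    rw [abs_of_neg (by rw [hp]; linarith : p < 0),
      abs_of_nonneg (Real.rpow_nonneg (hr x).le _), abs_two, hp]
    ring
  have hfun : (fun x : E d => ‖fderiv ℝ (fun x : E d => (1 + ‖x‖ ^ 2) ^ p) x‖)
      = fun x : E d => ((d : ℝ) - 1) * (‖x‖ * (1 + ‖x‖ ^ 2) ^ (p - 1)) := funext hnorm
  have hsq : ∀ x : E d, (((d : ℝ) - 1) * (‖x‖ * (1 + ‖x‖ ^ 2) ^ (p - 1))) ^ (2 : ℝ)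
      = ((d : ℝ) - 1) ^ 2 * ((1 + ‖x‖ ^ 2) ^ (-(d : ℝ)) - (1 + ‖x‖ ^ 2) ^ (-((d : ℝ) + 1))) := by
    intro x
    have e2 : ((1 + ‖x‖ ^ 2) ^ (p - 1)) ^ (2 : ℕ) = (1 + ‖x‖ ^ 2) ^ (-((d : ℝ) + 1)) := by
      rw [← Real.rpow_natCast ((1 + ‖x‖ ^ 2) ^ (p - 1)) 2, ← Real.rpow_mul (hr x).le]
      congr 1
      rw [hp]
      push_cast
      ring
    have e : (1 + ‖x‖ ^ 2) ^ (-(d : ℝ)) = (1 + ‖x‖ ^ 2) ^ (-((d : ℝ) + 1)) * (1 + ‖x‖ ^ 2) := by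
      rw [show -(d : ℝ) = -((d : ℝ) + 1) + 1 by ring, Real.rpow_add_one (hr x).ne']
    have hts : (((d : ℝ) - 1) * (‖x‖ * (1 + ‖x‖ ^ 2) ^ (p - 1))) ^ (2 : ℝ)
        = (((d : ℝ) - 1) * (‖x‖ * (1 + ‖x‖ ^ 2) ^ (p - 1))) ^ (2 : ℕ) := by
      rw [← Real.rpow_natCast _ 2]; norm_num
    rw [hts]
    calc (((d : ℝ) - 1) * (‖x‖ * (1 + ‖x‖ ^ 2) ^ (p - 1))) ^ (2 : ℕ)
        = ((d : ℝ) - 1) ^ 2 * (‖x‖ ^ 2 * ((1 + ‖x‖ ^ 2) ^ (p - 1)) ^ (2 : ℕ)) := by ring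
      _ = _ := by rw [e2, e]; ring
  have hintd : Integrable (fun x : E d => (1 + ‖x‖ ^ 2) ^ (-(d : ℝ))) :=
    aux_integrable_J d hdn (by linarith)
  have hintd1 : Integrable (fun x : E d => (1 + ‖x‖ ^ 2) ^ (-((d : ℝ) + 1))) :=
    aux_integrable_J d hdn (by linarith)
  -- term 1
  have h1 : (eLpNorm (fun x : E d => ‖fderiv ℝ (fun x : E d => (1 + ‖x‖ ^ 2) ^ p) x‖)
        2 volume).toReal = (((d : ℝ) - 1) ^ 2 * (K / 2)) ^ ((1 : ℝ) / 2) := by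
    rw [hfun]
    have ht := aux_toReal_eLpNorm d (fun x : E d => ((d : ℝ) - 1) * (‖x‖ * (1 + ‖x‖ ^ 2) ^ (p - 1)))
      (fun x => by positivity) two_pos
      (Continuous.aestronglyMeasurable
        (continuous_const.mul (continuous_norm.mul
          ((continuous_const.add ((continuous_norm).pow 2)).rpow_const
            fun x => Or.inl (hr x).ne'))))
      (by
        have heq : (fun x : E d => (((d : ℝ) - 1) * (‖x‖ * (1 + ‖x‖ ^ 2) ^ (p - 1))) ^ (2 : ℝ))
            = fun x : E d => ((d : ℝ) - 1) ^ 2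
                * ((1 + ‖x‖ ^ 2) ^ (-(d : ℝ)) - (1 + ‖x‖ ^ 2) ^ (-((d : ℝ) + 1))) :=
          funext hsq
        rw [heq]
        exact (hintd.sub hintd1).const_mul _)
    rw [show ENNReal.ofReal (2 : ℝ) = (2 : ℝ≥0∞) by simp] at ht
    rw [ht]
    congr 1
    rw [funext hsq, MeasureTheory.integral_const_mul, integral_sub hintd hintd1, hbase, hbase1]
    ring
  -- term 2
  have h2 : (eLpNorm (fun x : E d => (1 + ‖x‖ ^ 2) ^ p)
        (ENNReal.ofReal (2 * (d : ℝ) / ((d : ℝ) - 1))) volume).toReal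
      = K ^ (1 / (2 * (d : ℝ) / ((d : ℝ) - 1))) := by
    have hq : (0 : ℝ) < 2 * (d : ℝ) / ((d : ℝ) - 1) := by positivity
    have hpow : ∀ x : E d, ((1 + ‖x‖ ^ 2) ^ p) ^ (2 * (d : ℝ) / ((d : ℝ) - 1))
        = (1 + ‖x‖ ^ 2) ^ (-(d : ℝ)) := by
      intro x
      rw [← Real.rpow_mul (hr x).le]
      congr 1
      rw [hp]
      field_simp
    rw [aux_toReal_eLpNorm d _ (fun x => Real.rpow_nonneg (hr x).le _) hq
      hcont.aestronglyMeasurable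
      (by rw [funext hpow]; exact hintd)]
    rw [funext hpow, hbase]
  -- term 3
  have h3 : (eLpNorm (fun x : E d => (1 + ‖x‖ ^ 2) ^ p)
        (ENNReal.ofReal (2 * ((d : ℝ) + 1) / ((d : ℝ) - 1))) volume).toReal
      = (K / 2) ^ (1 / (2 * ((d : ℝ) + 1) / ((d : ℝ) - 1))) := by
    have hq : (0 : ℝ) < 2 * ((d : ℝ) + 1) / ((d : ℝ) - 1) := by positivity
    have hpow : ∀ x : E d, ((1 + ‖x‖ ^ 2) ^ p) ^ (2 * ((d : ℝ) + 1) / ((d : ℝ) - 1))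
        = (1 + ‖x‖ ^ 2) ^ (-((d : ℝ) + 1)) := by
      intro x
      rw [← Real.rpow_mul (hr x).le]
      congr 1
      rw [hp]
      field_simp
    rw [aux_toReal_eLpNorm d _ (fun x => Real.rpow_nonneg (hr x).le _) hq
      hcont.aestronglyMeasurable
      (by rw [funext hpow]; exact hintd1)]
    rw [funext hpow, hbase1]
  rw [h1, h2, h3]
  -- now pure real algebra
  have hA : (((((d : ℝ) - 1) ^ 2 * (K / 2)) ^ ((1 : ℝ) / 2)) ^ (2 : ℕ))
      = ((d : ℝ) - 1) ^ 2 * (K / 2) := by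
    rw [← Real.rpow_natCast ((((d : ℝ) - 1) ^ 2 * (K / 2)) ^ ((1 : ℝ) / 2)) 2,
      ← Real.rpow_mul (by positivity)]
    norm_num
  have h24 : (2 : ℝ) ^ (-2 : ℝ) = 1 / 4 := by
    rw [show (-2 : ℝ) = ((-2 : ℤ) : ℝ) by norm_num, Real.rpow_intCast]
    norm_num
  have hB : (K ^ (1 / (2 * (d : ℝ) / ((d : ℝ) - 1)))) ^ (4 / ((d : ℝ) - 1))
      = Sd ^ ((2 : ℝ) / (d : ℝ)) * (1 / 4) := by
    rw [← Real.rpow_mul hK.le,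
      show 1 / (2 * (d : ℝ) / ((d : ℝ) - 1)) * (4 / ((d : ℝ) - 1)) = (2 : ℝ) / (d : ℝ) by
        field_simp; ring]
    rw [hKdef, Real.mul_rpow hSd.le (by positivity),
      ← Real.rpow_mul (by norm_num : (0:ℝ) ≤ 2),
      show -(d : ℝ) * ((2 : ℝ) / (d : ℝ)) = (-2 : ℝ) by field_simp, h24]
  have hC : ((K / 2) ^ (1 / (2 * ((d : ℝ) + 1) / ((d : ℝ) - 1)))) ^ (2 * ((d : ℝ) + 1) / ((d : ℝ) - 1))
      = K / 2 := by
    rw [← Real.rpow_mul (by positivity),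
      show 1 / (2 * ((d : ℝ) + 1) / ((d : ℝ) - 1)) * (2 * ((d : ℝ) + 1) / ((d : ℝ) - 1)) = 1 by
        field_simp]
    exact Real.rpow_one _
  rw [hA, hB, hC]
  have e5 : Sd ^ (-(2 : ℝ) / (d : ℝ)) * Sd ^ ((2 : ℝ) / (d : ℝ)) = 1 := by
    rw [← Real.rpow_add hSd, show -(2 : ℝ) / (d : ℝ) + (2 : ℝ) / (d : ℝ) = 0 by ring,
      Real.rpow_zero]
  have hdd : ((d : ℝ) * ((d : ℝ) - 2)) ≠ 0 := by positivity
  calc 4 / ((d : ℝ) * ((d : ℝ) - 2)) * Sd ^ (-(2 : ℝ) / (d : ℝ)) *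
        ((d : ℝ) * ((d : ℝ) - 2) / ((d : ℝ) - 1) ^ 2) * (((d : ℝ) - 1) ^ 2 * (K / 2)) *
        (Sd ^ ((2 : ℝ) / (d : ℝ)) * (1 / 4))
      = (Sd ^ (-(2 : ℝ) / (d : ℝ)) * Sd ^ ((2 : ℝ) / (d : ℝ))) *
          (4 / ((d : ℝ) * ((d : ℝ) - 2)) * ((d : ℝ) * ((d : ℝ) - 2) / ((d : ℝ) - 1) ^ 2) *
            ((d : ℝ) - 1) ^ 2 * (K / 2) * (1 / 4)) := by ring
    _ = K / 2 := by
        rw [e5, one_mul]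
        field_simp


end
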